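/- arXiv:2401.09191 — 2 statements merged into one kernel-verified Lean document; each statement's English description precedes it below -/
import Mathlib

section
/- Let g = (g₁,…,g_K) be any potentials, let I ∈ {1,…,K}, and let g' be obtained from g by setting g'_I := g_I + η log μ_I − η log(Σ_{A∈S_K^L(I)} P_I#π_A(g)) pointwise on 𝒳_I and g'_i := g_i for i ≠ I. Then 𝒢^L(g) − 𝒢^L(g') = D_KL(μ_I ‖ Σ_{A∈S_K^L(I)} P_I#π_A(g)). -/
open scoped ENNReal BigOperators

noncomputable section

/-- `S_K^L`: the nonempty subsets of `{1,…,K}` of size at most `L`. -/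
def SKL (K L : ℕ) : Finset (Finset (Fin K)) :=
  Finset.univ.filter fun A => A.Nonempty ∧ A.card ≤ L

/-- `S_K^L(i)`: the members of `S_K^L` containing `i`. -/
def SKLi (K L : ℕ) (i : Fin K) : Finset (Finset (Fin K)) :=
  (SKL K L).filter fun A => i ∈ A

variable {K : ℕ} (𝒳 : Fin K → Type*) [∀ i, Fintype (𝒳 i)] [∀ i, DecidableEq (𝒳 i)]

/-- The `i`-th marginal `Pᵢ#π_A` of a coupling `π_A` on `𝒳^A`
(zero when `i ∉ A`). -/
def marg (A : Finset (Fin K)) (π : ((j : A) → 𝒳 j.1) → ℝ) (i : Fin K) (xi : 𝒳 i) : ℝ :=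
  if hi : i ∈ A then
    ∑ x : (j : A) → 𝒳 j.1, (if x ⟨i, hi⟩ = xi then π x else 0)
  else 0

/-- `Σ_{A ∈ S_K^L(i)} Pᵢ#π_A`, evaluated at `xi`. -/
def totMarg (L : ℕ) (π : (A : Finset (Fin K)) → ((j : A) → 𝒳 j.1) → ℝ)
    (i : Fin K) (xi : 𝒳 i) : ℝ :=
  ∑ A ∈ SKLi K L i, marg 𝒳 A (π A) i xi

/-- The couplings `π_A(g)` induced by potentials `g`, interpreted as `0` where the
cost is `+∞`. -/
def piInd (η : ℝ) (c : (A : Finset (Fin K)) → ((j : A) → 𝒳 j.1) → ℝ≥0∞)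
    (g : (i : Fin K) → 𝒳 i → ℝ) (A : Finset (Fin K)) (x : (j : A) → 𝒳 j.1) : ℝ :=
  if c A x = ⊤ then 0
  else Real.exp ((∑ j : A, g j.1 (x j) - (1 + (c A x).toReal)) / η)

/-- The dual objective `𝒢^L`. -/
def dualObj (η : ℝ) (L : ℕ) (c : (A : Finset (Fin K)) → ((j : A) → 𝒳 j.1) → ℝ≥0∞)
    (μ : (i : Fin K) → 𝒳 i → ℝ) (g : (i : Fin K) → 𝒳 i → ℝ) : ℝ :=
  (∑ A ∈ SKL K L, ∑ x : (j : A) → 𝒳 j.1, piInd 𝒳 η c g A x)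
    - (1 / η) * ∑ i : Fin K, ∑ xi : 𝒳 i, g i xi * μ i xi

/-- Unnormalized Kullback–Leibler divergence (convention `0 · log 0 = 0`). -/
def KLdiv {Z : Type*} [Fintype Z] (α β : Z → ℝ) : ℝ :=
  (∑ z, (β z - α z)) + ∑ z, α z * Real.log (α z / β z)

/-- ℓ¹ norm of a vector on a finite set. -/
def l1 {Z : Type*} [Fintype Z] (v : Z → ℝ) : ℝ := ∑ z, |v z|

/-- `g : ℕ → potentials` is generated by the greedy Sinkhorn iteration: `g⁰ = 0`,
and at each step a coordinate `I` maximizing the KL-discrepancy of the `I`-th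
marginal is updated by the Sinkhorn formula, all others kept fixed. -/
def IsGreedySinkhorn (η : ℝ) (L : ℕ)
    (c : (A : Finset (Fin K)) → ((j : A) → 𝒳 j.1) → ℝ≥0∞)
    (μ : (i : Fin K) → 𝒳 i → ℝ) (g : ℕ → (i : Fin K) → 𝒳 i → ℝ) : Prop :=
  (∀ i xi, g 0 i xi = 0) ∧
  ∀ t : ℕ, ∃ I : Fin K,
    (∀ i : Fin K,
      KLdiv (μ i) (totMarg 𝒳 L (piInd 𝒳 η c (g t)) i) ≤
        KLdiv (μ I) (totMarg 𝒳 L (piInd 𝒳 η c (g t)) I)) ∧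
    (∀ xI : 𝒳 I, g (t + 1) I xI =
      g t I xI + η * Real.log (μ I xI)
        - η * Real.log (totMarg 𝒳 L (piInd 𝒳 η c (g t)) I xI)) ∧
    (∀ i : Fin K, i ≠ I → g (t + 1) i = g t i)

/-- The marginal error `E_t` of the greedy Sinkhorn iteration. -/
def Err (η : ℝ) (L : ℕ) (c : (A : Finset (Fin K)) → ((j : A) → 𝒳 j.1) → ℝ≥0∞)
    (μ : (i : Fin K) → 𝒳 i → ℝ) (g : ℕ → (i : Fin K) → 𝒳 i → ℝ) (t : ℕ) : ℝ :=
  ∑ i : Fin K,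
    l1 (fun xi : 𝒳 i => μ i xi - totMarg 𝒳 L (piInd 𝒳 η c (g t)) i xi)

/-- `C* := maxᵢ nᵢ / n`. -/
def Cstar (n : ℝ) : ℝ := ((Finset.univ.sup fun i : Fin K => Fintype.card (𝒳 i) : ℕ) : ℝ) / n

/-- `min_{j, y} μ_j(y)`. -/
def muMin (μ : (i : Fin K) → 𝒳 i → ℝ) : ℝ :=
  sInf {v : ℝ | ∃ (j : Fin K) (y : 𝒳 j), v = μ j y}

/-- `R̄ := L − η log min_{j,y} μ_j(y) + η L log(K C* n)`. -/
def Rbar (η : ℝ) (L : ℕ) (n : ℝ) (μ : (i : Fin K) → 𝒳 i → ℝ) : ℝ :=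
  (L : ℝ) - η * Real.log (muMin 𝒳 μ) + η * L * Real.log (K * Cstar 𝒳 n * n)



section AuxStmt10
set_option linter.unusedSectionVars false

lemma aux_piInd_nonneg (η : ℝ) (c) (g) (A : Finset (Fin K)) (x : (j : A) → 𝒳 j.1) :
    0 ≤ piInd 𝒳 η c g A x := by
  unfold piInd; split
  · exact le_refl 0
  · exact (Real.exp_pos _).le

lemma aux_marg_nonneg (A : Finset (Fin K)) (π : ((j : A) → 𝒳 j.1) → ℝ)
    (hπ : ∀ x, 0 ≤ π x) (i : Fin K) (xi : 𝒳 i) : 0 ≤ marg 𝒳 A π i xi := by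
  unfold marg; split
  · refine Finset.sum_nonneg fun x _ => ?_
    split
    · exact hπ x
    · exact le_refl 0
  · exact le_refl 0

lemma aux_regroup (A : Finset (Fin K)) (π : ((j : A) → 𝒳 j.1) → ℝ)
    (I : Fin K) (hi : I ∈ A) (f : 𝒳 I → ℝ) :
    ∑ x : (j : A) → 𝒳 j.1, π x * f (x ⟨I, hi⟩) = ∑ xi : 𝒳 I, f xi * marg 𝒳 A π I xi := by
  unfold marg
  simp only [dif_pos hi]
  simp_rw [Finset.mul_sum, mul_ite, mul_zero]
  rw [Finset.sum_comm]
  refine Finset.sum_congr rfl fun x _ => ?_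
  rw [Finset.sum_ite_eq]
  simp [mul_comm]

lemma aux_totMarg_pos (L : ℕ) (hL : 1 ≤ L) (η : ℝ)
    (c : (A : Finset (Fin K)) → ((j : A) → 𝒳 j.1) → ℝ≥0∞)
    (hc : ∀ (i : Fin K) (x : (j : ({i} : Finset (Fin K))) → 𝒳 j.1), c {i} x = 0)
    (g : (i : Fin K) → 𝒳 i → ℝ) (I : Fin K) (xI : 𝒳 I) :
    0 < totMarg 𝒳 L (piInd 𝒳 η c g) I xI := by
  unfold totMarg
  have hmem : ({I} : Finset (Fin K)) ∈ SKLi K L I := by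
    simp [SKLi, SKL, hL]
  refine Finset.sum_pos' (fun A _ => aux_marg_nonneg 𝒳 A _ (aux_piInd_nonneg 𝒳 η c g A) I xI)
    ⟨{I}, hmem, ?_⟩
  unfold marg
  have hi : I ∈ ({I} : Finset (Fin K)) := Finset.mem_singleton_self I
  rw [dif_pos hi]
  set x₀ : (j : ({I} : Finset (Fin K))) → 𝒳 j.1 :=
    fun j => cast (congrArg 𝒳 (Finset.mem_singleton.mp j.2).symm) xI with hx₀
  have hx : x₀ ⟨I, hi⟩ = xI := eq_of_heq (cast_heq _ xI)
  refine Finset.sum_pos' (fun x _ => ?_) ⟨x₀, Finset.mem_univ _, ?_⟩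
  · split
    · exact aux_piInd_nonneg 𝒳 η c g _ x
    · exact le_refl 0
  · rw [if_pos hx]
    unfold piInd
    rw [if_neg (by rw [hc I x₀]; exact ENNReal.zero_ne_top)]
    exact Real.exp_pos _

lemma aux_piInd_update (η : ℝ) (hη : 0 < η)
    (c : (A : Finset (Fin K)) → ((j : A) → 𝒳 j.1) → ℝ≥0∞)
    (g g' : (i : Fin K) → 𝒳 i → ℝ) (I : Fin K)
    (ν m : 𝒳 I → ℝ) (hν : ∀ xi, 0 < ν xi) (hm : ∀ xi, 0 < m xi)
    (hupd : ∀ xI, g' I xI = g I xI + η * Real.log (ν xI) - η * Real.log (m xI))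
    (hfix : ∀ i : Fin K, i ≠ I → g' i = g i)
    (A : Finset (Fin K)) (hi : I ∈ A) (x : (j : A) → 𝒳 j.1) :
    piInd 𝒳 η c g' A x = piInd 𝒳 η c g A x * (ν (x ⟨I, hi⟩) / m (x ⟨I, hi⟩)) := by
  unfold piInd
  by_cases hC : c A x = ⊤
  · simp [hC]
  · rw [if_neg hC, if_neg hC]
    have h1 : ∑ j : A, (g' j.1 (x j) - g j.1 (x j)) = g' I (x ⟨I, hi⟩) - g I (x ⟨I, hi⟩) := by
      refine Finset.sum_eq_single_of_mem (⟨I, hi⟩ : {x : Fin K // x ∈ A})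
        (Finset.mem_univ _) fun j _ hne => ?_
      have hji : j.1 ≠ I := fun h => hne (Subtype.ext h)
      rw [hfix j.1 hji]; ring
    rw [Finset.sum_sub_distrib, hupd] at h1
    have hsum : ∑ j : A, g' j.1 (x j) = (∑ j : A, g j.1 (x j))
        + η * Real.log (ν (x ⟨I, hi⟩)) - η * Real.log (m (x ⟨I, hi⟩)) := by linarith
    rw [hsum, show ((∑ j : A, g j.1 (x j)) + η * Real.log (ν (x ⟨I, hi⟩))
        - η * Real.log (m (x ⟨I, hi⟩)) - (1 + (c A x).toReal)) / η
      = (∑ j : A, g j.1 (x j) - (1 + (c A x).toReal)) / η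
        + (Real.log (ν (x ⟨I, hi⟩)) - Real.log (m (x ⟨I, hi⟩))) by field_simp; ring,
      Real.exp_add, Real.exp_sub, Real.exp_log (hν _), Real.exp_log (hm _)]

end AuxStmt10

/-- one greedy Sinkhorn update at coordinate `I` decreases the dual
objective by exactly `D_KL(μ_I ‖ Σ_{A∈S_K^L(I)} P_I#π_A(g))`. -/
theorem stmt10 (K L : ℕ) (hK : 0 < K) (hL : 1 ≤ L) (hLK : L ≤ K)
    (𝒳 : Fin K → Type*) [∀ i, Fintype (𝒳 i)] [∀ i, DecidableEq (𝒳 i)]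
    [∀ i, Nonempty (𝒳 i)]
    (η : ℝ) (hη : 0 < η)
    (c : (A : Finset (Fin K)) → ((j : A) → 𝒳 j.1) → ℝ≥0∞)
    (hc : ∀ (i : Fin K) (x : (j : ({i} : Finset (Fin K))) → 𝒳 j.1), c {i} x = 0)
    (μ : (i : Fin K) → 𝒳 i → ℝ) (hμpos : ∀ i xi, 0 < μ i xi)
    (hmass : ∑ i : Fin K, ∑ xi : 𝒳 i, μ i xi = 1)
    (g g' : (i : Fin K) → 𝒳 i → ℝ) (I : Fin K)
    (hupd : ∀ xI : 𝒳 I, g' I xI =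
      g I xI + η * Real.log (μ I xI)
        - η * Real.log (totMarg 𝒳 L (piInd 𝒳 η c g) I xI))
    (hfix : ∀ i : Fin K, i ≠ I → g' i = g i) :
    dualObj 𝒳 η L c μ g - dualObj 𝒳 η L c μ g' =
      KLdiv (μ I) (totMarg 𝒳 L (piInd 𝒳 η c g) I) := by
  classical
  have hm : ∀ xi : 𝒳 I, 0 < totMarg 𝒳 L (piInd 𝒳 η c g) I xi :=
    fun xi => aux_totMarg_pos 𝒳 L hL η c hc g I xi
  set m : 𝒳 I → ℝ := totMarg 𝒳 L (piInd 𝒳 η c g) I with hmdef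
  have hpoint : ∀ (A : Finset (Fin K)) (hi : I ∈ A) (x : (j : A) → 𝒳 j.1),
      piInd 𝒳 η c g' A x = piInd 𝒳 η c g A x * (μ I (x ⟨I, hi⟩) / m (x ⟨I, hi⟩)) :=
    fun A hi x => aux_piInd_update 𝒳 η hη c g g' I (μ I) m (hμpos I) hm hupd hfix A hi x
  have hfixA : ∀ (A : Finset (Fin K)), I ∉ A → ∀ x : (j : A) → 𝒳 j.1,
      piInd 𝒳 η c g' A x = piInd 𝒳 η c g A x := by
    intro A hIA x
    have hs : ∑ j : A, g' j.1 (x j) = ∑ j : A, g j.1 (x j) :=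
      Finset.sum_congr rfl fun j _ => by rw [hfix j.1 (fun h => hIA (h ▸ j.2))]
    unfold piInd
    rw [hs]
  have hpart1 : (∑ A ∈ SKL K L, ∑ x : (j : A) → 𝒳 j.1, piInd 𝒳 η c g A x)
      - (∑ A ∈ SKL K L, ∑ x : (j : A) → 𝒳 j.1, piInd 𝒳 η c g' A x)
      = ∑ xi : 𝒳 I, (m xi - μ I xi) := by
    rw [← Finset.sum_sub_distrib]
    simp_rw [← Finset.sum_sub_distrib]
    rw [← Finset.sum_filter_add_sum_filter_not (SKL K L) (fun A => I ∈ A)]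
    have hzero : ∑ A ∈ (SKL K L).filter (fun A => ¬ I ∈ A),
        ∑ x : (j : A) → 𝒳 j.1, (piInd 𝒳 η c g A x - piInd 𝒳 η c g' A x) = 0 := by
      refine Finset.sum_eq_zero fun A hA => ?_
      have hIA : I ∉ A := (Finset.mem_filter.mp hA).2
      exact Finset.sum_eq_zero fun x _ => by rw [hfixA A hIA x]; ring
    rw [hzero, add_zero]
    have hSKLi : (SKL K L).filter (fun A => I ∈ A) = SKLi K L I := rfl
    rw [hSKLi]
    have hAeq : ∀ A ∈ SKLi K L I,
        ∑ x : (j : A) → 𝒳 j.1, (piInd 𝒳 η c g A x - piInd 𝒳 η c g' A x)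
        = ∑ xi : 𝒳 I, (1 - μ I xi / m xi) * marg 𝒳 A (piInd 𝒳 η c g A) I xi := by
      intro A hA
      have hi : I ∈ A := (Finset.mem_filter.mp hA).2
      rw [← aux_regroup 𝒳 A (piInd 𝒳 η c g A) I hi (fun xi => 1 - μ I xi / m xi)]
      refine Finset.sum_congr rfl fun x _ => ?_
      rw [hpoint A hi x]; ring
    rw [Finset.sum_congr rfl hAeq, Finset.sum_comm]
    refine Finset.sum_congr rfl fun xi _ => ?_
    rw [← Finset.mul_sum]
    have hmm : ∑ A ∈ SKLi K L I, marg 𝒳 A (piInd 𝒳 η c g A) I xi = m xi := rfl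
    rw [hmm]
    field_simp [(hm xi).ne']
  have hpart2 : (∑ i : Fin K, ∑ xi : 𝒳 i, g' i xi * μ i xi)
      - ∑ i : Fin K, ∑ xi : 𝒳 i, g i xi * μ i xi
      = η * ∑ xi : 𝒳 I, μ I xi * Real.log (μ I xi / m xi) := by
    rw [← Finset.sum_sub_distrib]
    rw [Finset.sum_eq_single I (fun i _ hne => by rw [hfix i hne]; ring)
      (fun h => absurd (Finset.mem_univ I) h)]
    rw [← Finset.sum_sub_distrib, Finset.mul_sum]
    refine Finset.sum_congr rfl fun xi _ => ?_
    rw [hupd xi, Real.log_div (hμpos I xi).ne' (hm xi).ne']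
    ring
  have h2' : (1 / η) * (∑ i : Fin K, ∑ xi : 𝒳 i, g' i xi * μ i xi)
      - (1 / η) * (∑ i : Fin K, ∑ xi : 𝒳 i, g i xi * μ i xi)
      = ∑ xi : 𝒳 I, μ I xi * Real.log (μ I xi / m xi) := by
    rw [← mul_sub, hpart2]
    field_simp
  unfold dualObj KLdiv
  linarith [hpart1, h2']

end
end

section
/- Let (gᵗ) be generated by the greedy Sinkhorn iteration and let g* be a minimizer of 𝒢^L over all potentials. Then for every t ≥ 1, 𝒢^L(gᵗ) − 𝒢^L(g*) ≤ (R̄/η) · E_t. -/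
open scoped ENNReal BigOperators

noncomputable section

variable {K : ℕ} (𝒳 : Fin K → Type*) [∀ i, Fintype (𝒳 i)] [∀ i, DecidableEq (𝒳 i)]

set_option linter.unusedSectionVars false

lemma piInd_nonneg (η : ℝ) (c : (A : Finset (Fin K)) → ((j : A) → 𝒳 j.1) → ℝ≥0∞)
    (g : (i : Fin K) → 𝒳 i → ℝ) (A : Finset (Fin K)) (x : (j : A) → 𝒳 j.1) :
    0 ≤ piInd 𝒳 η c g A x := by
  unfold piInd; split
  · exact le_refl 0
  · positivity

lemma marg_nonneg {A : Finset (Fin K)} {π : ((j : A) → 𝒳 j.1) → ℝ} (hπ : ∀ x, 0 ≤ π x)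
    (i : Fin K) (xi : 𝒳 i) : 0 ≤ marg 𝒳 A π i xi := by
  unfold marg; split
  · exact Finset.sum_nonneg fun x _ => by split; exacts [hπ x, le_refl 0]
  · exact le_refl 0

lemma totMarg_nonneg {L : ℕ} {π : (A : Finset (Fin K)) → ((j : A) → 𝒳 j.1) → ℝ}
    (hπ : ∀ A x, 0 ≤ π A x) (i : Fin K) (xi : 𝒳 i) : 0 ≤ totMarg 𝒳 L π i xi :=
  Finset.sum_nonneg fun A _ => marg_nonneg 𝒳 (hπ A) i xi

def sF (i : Fin K) (xi : 𝒳 i) : (j : ({i} : Finset (Fin K))) → 𝒳 j.1 :=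
  fun j => cast (congrArg 𝒳 (Finset.mem_singleton.mp j.2).symm) xi

lemma sF_apply (i : Fin K) (xi : 𝒳 i) (h : i ∈ ({i} : Finset (Fin K))) :
    sF 𝒳 i xi ⟨i, h⟩ = xi := eq_of_heq (cast_heq _ _)

lemma sum_subtype_singleton {M : Type*} [AddCommMonoid M] (i : Fin K)
    (f : (j : ({i} : Finset (Fin K))) → M) :
    ∑ j : ({i} : Finset (Fin K)), f j = f ⟨i, Finset.mem_singleton_self i⟩ := by
  have h : ({i} : Finset (Fin K)).attach = {⟨i, Finset.mem_singleton_self i⟩} :=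
    Finset.eq_singleton_iff_unique_mem.mpr
      ⟨Finset.mem_attach _ _, fun x _ => Subtype.ext (Finset.mem_singleton.mp x.2)⟩
  rw [Finset.univ_eq_attach, h, Finset.sum_singleton]

lemma piInd_singleton {η : ℝ} {c : (A : Finset (Fin K)) → ((j : A) → 𝒳 j.1) → ℝ≥0∞}
    (hc : ∀ (i : Fin K) (x : (j : ({i} : Finset (Fin K))) → 𝒳 j.1), c {i} x = 0)
    (g : (i : Fin K) → 𝒳 i → ℝ) (i : Fin K) (xi : 𝒳 i) :
    piInd 𝒳 η c g {i} (sF 𝒳 i xi) = Real.exp ((g i xi - 1) / η) := by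
  unfold piInd
  rw [hc, if_neg (by simp)]
  congr 2
  rw [sum_subtype_singleton i (fun j => g j.1 (sF 𝒳 i xi j)), sF_apply]
  simp

set_option linter.unusedSectionVars false

lemma singleton_mem_SKLi (hL : 1 ≤ L) (i : Fin K) : {i} ∈ SKLi K L i := by
  simp [SKLi, SKL, hL]

lemma marg_singleton {η : ℝ}
    {c : (A : Finset (Fin K)) → ((j : A) → 𝒳 j.1) → ℝ≥0∞}
    (hc : ∀ (i : Fin K) (x : (j : ({i} : Finset (Fin K))) → 𝒳 j.1), c {i} x = 0)
    (g : (i : Fin K) → 𝒳 i → ℝ) (i : Fin K) (xi : 𝒳 i) :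
    marg 𝒳 {i} (piInd 𝒳 η c g {i}) i xi = Real.exp ((g i xi - 1) / η) := by
  unfold marg
  rw [dif_pos (Finset.mem_singleton_self i)]
  rw [Fintype.sum_eq_single (sF 𝒳 i xi) ?_]
  · rw [if_pos (sF_apply 𝒳 i xi _), piInd_singleton 𝒳 hc]
  · intro x hx
    rw [if_neg]
    intro hxx
    apply hx
    funext j
    have hj : j = ⟨i, Finset.mem_singleton_self i⟩ := Subtype.ext (Finset.mem_singleton.mp j.2)
    rw [hj, hxx, sF_apply]

lemma exp_le_totMarg {L : ℕ} (hL : 1 ≤ L) {η : ℝ}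
    {c : (A : Finset (Fin K)) → ((j : A) → 𝒳 j.1) → ℝ≥0∞}
    (hc : ∀ (i : Fin K) (x : (j : ({i} : Finset (Fin K))) → 𝒳 j.1), c {i} x = 0)
    (g : (i : Fin K) → 𝒳 i → ℝ) (i : Fin K) (xi : 𝒳 i) :
    Real.exp ((g i xi - 1) / η) ≤ totMarg 𝒳 L (piInd 𝒳 η c g) i xi := by
  rw [← marg_singleton 𝒳 hc g i xi]
  unfold totMarg
  exact Finset.single_le_sum (f := fun A => marg 𝒳 A (piInd 𝒳 η c g A) i xi)
    (fun A _ => marg_nonneg 𝒳 (fun x => piInd_nonneg 𝒳 _ _ _ _ _) i xi)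
    (singleton_mem_SKLi hL i)

lemma totMarg_pos {L : ℕ} (hL : 1 ≤ L) {η : ℝ}
    {c : (A : Finset (Fin K)) → ((j : A) → 𝒳 j.1) → ℝ≥0∞}
    (hc : ∀ (i : Fin K) (x : (j : ({i} : Finset (Fin K))) → 𝒳 j.1), c {i} x = 0)
    (g : (i : Fin K) → 𝒳 i → ℝ) (i : Fin K) (xi : 𝒳 i) :
    0 < totMarg 𝒳 L (piInd 𝒳 η c g) i xi :=
  lt_of_lt_of_le (Real.exp_pos _) (exp_le_totMarg 𝒳 hL hc g i xi)

/-- Fubini pairing: pairing a coupling against a function of the `i`-th coordinate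
equals pairing the marginal. -/

lemma sum_mul_comp {A : Finset (Fin K)} (π : ((j : A) → 𝒳 j.1) → ℝ)
    {i : Fin K} (hi : i ∈ A) (δ : 𝒳 i → ℝ) :
    ∑ x : (j : A) → 𝒳 j.1, π x * δ (x ⟨i, hi⟩) = ∑ xi : 𝒳 i, δ xi * marg 𝒳 A π i xi := by
  unfold marg
  simp only [dif_pos hi]
  have : ∀ xi : 𝒳 i, δ xi * ∑ x : (j : A) → 𝒳 j.1, (if x ⟨i, hi⟩ = xi then π x else 0)
      = ∑ x : (j : A) → 𝒳 j.1, (if x ⟨i, hi⟩ = xi then π x * δ xi else 0) := by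
    intro xi
    rw [Finset.mul_sum]
    refine Finset.sum_congr rfl fun x _ => ?_
    split <;> ring
  simp_rw [this]
  rw [Finset.sum_comm]
  refine Finset.sum_congr rfl fun x _ => ?_
  rw [Finset.sum_ite_eq (Finset.univ) (x ⟨i, hi⟩) (fun xi => π x * δ xi)]
  simp

lemma exp_sub_exp_le (a b : ℝ) : Real.exp a - Real.exp b ≤ Real.exp a * (a - b) := by
  have h := Real.add_one_le_exp (b - a)
  have h2 := Real.exp_pos a
  have h3 : Real.exp a * (b - a + 1) ≤ Real.exp a * Real.exp (b - a) :=
    mul_le_mul_of_nonneg_left h h2.le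
  rw [← Real.exp_add] at h3
  have : a + (b - a) = b := by ring
  rw [this] at h3
  nlinarith

lemma piInd_sub_le {η : ℝ} {c : (A : Finset (Fin K)) → ((j : A) → 𝒳 j.1) → ℝ≥0∞}
    (g g' : (i : Fin K) → 𝒳 i → ℝ) (A : Finset (Fin K)) (x : (j : A) → 𝒳 j.1) :
    piInd 𝒳 η c g A x - piInd 𝒳 η c g' A x ≤
      piInd 𝒳 η c g A x * ((∑ j : A, (g j.1 (x j) - g' j.1 (x j))) / η) := by
  unfold piInd
  split
  · simp
  · refine (exp_sub_exp_le _ _).trans_eq ?_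
    rw [Finset.sum_sub_distrib]
    ring

lemma sum_pair_rearrange {L : ℕ} (π : (A : Finset (Fin K)) → ((j : A) → 𝒳 j.1) → ℝ)
    (δ : (i : Fin K) → 𝒳 i → ℝ) :
    ∑ A ∈ SKL K L, ∑ x : (j : A) → 𝒳 j.1, π A x * ∑ j : A, δ j.1 (x j)
      = ∑ i : Fin K, ∑ xi : 𝒳 i, δ i xi * totMarg 𝒳 L π i xi := by
  have step1 : ∀ A : Finset (Fin K),
      ∑ x : (j : A) → 𝒳 j.1, π A x * ∑ j : A, δ j.1 (x j)
        = ∑ j ∈ A, ∑ xj : 𝒳 j, δ j xj * marg 𝒳 A (π A) j xj := by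
    intro A
    rw [← Finset.sum_attach A (fun j => ∑ xj : 𝒳 j, δ j xj * marg 𝒳 A (π A) j xj),
      ← Finset.univ_eq_attach]
    rw [← Finset.sum_congr rfl (fun (j : A) _ => sum_mul_comp 𝒳 (π A) j.2 (δ j.1))]
    rw [Finset.sum_comm]
    exact Finset.sum_congr rfl fun x _ => (Finset.mul_sum _ _ _)
  rw [Finset.sum_congr rfl fun A _ => step1 A]
  have step2 : ∀ A ∈ SKL K L, ∑ j ∈ A, ∑ xj : 𝒳 j, δ j xj * marg 𝒳 A (π A) j xj
      = ∑ j : Fin K, if j ∈ A then ∑ xj : 𝒳 j, δ j xj * marg 𝒳 A (π A) j xj else 0 := by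
    intro A _
    rw [Finset.sum_ite_mem, Finset.univ_inter]
  rw [Finset.sum_congr rfl step2, Finset.sum_comm]
  refine Finset.sum_congr rfl fun i _ => ?_
  rw [← Finset.sum_filter]
  have : (SKL K L).filter (fun A => i ∈ A) = SKLi K L i := rfl
  rw [this]
  unfold totMarg
  rw [Finset.sum_comm]
  exact Finset.sum_congr rfl fun xi _ => (Finset.mul_sum _ _ _).symm

lemma dual_diff_le {η : ℝ} (hη : 0 < η) {L : ℕ}
    (c : (A : Finset (Fin K)) → ((j : A) → 𝒳 j.1) → ℝ≥0∞)
    (μ : (i : Fin K) → 𝒳 i → ℝ) (g g' : (i : Fin K) → 𝒳 i → ℝ) :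
    dualObj 𝒳 η L c μ g - dualObj 𝒳 η L c μ g' ≤
      (1/η) * ∑ i : Fin K, ∑ xi : 𝒳 i,
        (g i xi - g' i xi) * (totMarg 𝒳 L (piInd 𝒳 η c g) i xi - μ i xi) := by
  unfold dualObj
  have h1 : (∑ A ∈ SKL K L, ∑ x : (j : A) → 𝒳 j.1, piInd 𝒳 η c g A x)
      - (∑ A ∈ SKL K L, ∑ x : (j : A) → 𝒳 j.1, piInd 𝒳 η c g' A x)
      ≤ (1/η) * ∑ A ∈ SKL K L, ∑ x : (j : A) → 𝒳 j.1,
          piInd 𝒳 η c g A x * ∑ j : A, (g j.1 (x j) - g' j.1 (x j)) := by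
    rw [← Finset.sum_sub_distrib, Finset.mul_sum]
    refine Finset.sum_le_sum fun A _ => ?_
    rw [← Finset.sum_sub_distrib, Finset.mul_sum]
    refine Finset.sum_le_sum fun x _ => ?_
    refine (piInd_sub_le 𝒳 g g' A x).trans_eq ?_
    ring
  rw [sum_pair_rearrange 𝒳 (piInd 𝒳 η c g) (fun i xi => g i xi - g' i xi)] at h1
  have h2 : ∑ i : Fin K, ∑ xi : 𝒳 i, g i xi * μ i xi
      - ∑ i : Fin K, ∑ xi : 𝒳 i, g' i xi * μ i xi
      = ∑ i : Fin K, ∑ xi : 𝒳 i, (g i xi - g' i xi) * μ i xi := by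
    rw [← Finset.sum_sub_distrib]
    refine Finset.sum_congr rfl fun i _ => ?_
    rw [← Finset.sum_sub_distrib]
    exact Finset.sum_congr rfl fun xi _ => by ring
  have h3 : ∑ i : Fin K, ∑ xi : 𝒳 i,
        (g i xi - g' i xi) * (totMarg 𝒳 L (piInd 𝒳 η c g) i xi - μ i xi)
      = (∑ i : Fin K, ∑ xi : 𝒳 i, (g i xi - g' i xi) * totMarg 𝒳 L (piInd 𝒳 η c g) i xi)
        - ∑ i : Fin K, ∑ xi : 𝒳 i, (g i xi - g' i xi) * μ i xi := by
    rw [← Finset.sum_sub_distrib]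
    refine Finset.sum_congr rfl fun i _ => ?_
    rw [← Finset.sum_sub_distrib]
    exact Finset.sum_congr rfl fun xi _ => by ring
  rw [h3, mul_sub, ← h2]
  linarith

lemma image_padSort {L : ℕ} (hK : 0 < K) {A : Finset (Fin K)} (hA : A.Nonempty)
    (hcard : A.card ≤ L) :
    Finset.image (fun j : Fin L =>
      (A.sort (·≤·)).getD j ((A.sort (·≤·)).getD 0 ⟨0, hK⟩)) Finset.univ = A := by
  have hlen : (A.sort (·≤·)).length = A.card := Finset.length_sort _
  have hpos : 0 < (A.sort (·≤·)).length := by rw [hlen]; exact Finset.card_pos.mpr hA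
  have hdef : (A.sort (·≤·)).getD 0 ⟨0, hK⟩ ∈ A := by
    rw [List.getD_eq_getElem _ _ hpos]
    exact (Finset.mem_sort _).mp (List.getElem_mem _)
  apply Finset.Subset.antisymm
  · intro a ha
    obtain ⟨j, _, rfl⟩ := Finset.mem_image.mp ha
    by_cases h : (j : ℕ) < (A.sort (·≤·)).length
    · rw [List.getD_eq_getElem _ _ h]
      exact (Finset.mem_sort _).mp (List.getElem_mem _)
    · rw [List.getD_eq_default _ _ (not_lt.mp h)]
      exact hdef
  · intro a ha
    have hal : a ∈ A.sort (·≤·) := (Finset.mem_sort _).mpr ha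
    obtain ⟨k, hk, rfl⟩ := List.mem_iff_getElem.mp hal
    have hkL : k < L := lt_of_lt_of_le (hlen ▸ hk) hcard
    refine Finset.mem_image.mpr ⟨⟨k, hkL⟩, Finset.mem_univ _, ?_⟩
    exact List.getD_eq_getElem _ _ hk

lemma card_SKLi_le (hK : 0 < K) (L : ℕ) (i : Fin K) : (SKLi K L i).card ≤ K ^ L := by
  classical
  set f : Finset (Fin K) → (Fin L → Fin K) := fun A => fun j : Fin L =>
    (A.sort (·≤·)).getD j ((A.sort (·≤·)).getD 0 ⟨0, hK⟩) with hf
  have h1 : (SKLi K L i).card ≤ (Finset.univ : Finset (Fin L → Fin K)).card := by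
    apply Finset.card_le_card_of_injOn f (fun A _ => Finset.mem_univ _)
    intro A hA B hB hfAB
    have hA' : A.Nonempty ∧ A.card ≤ L :=
      (Finset.mem_filter.mp (Finset.mem_filter.mp hA).1).2
    have hB' : B.Nonempty ∧ B.card ≤ L :=
      (Finset.mem_filter.mp (Finset.mem_filter.mp hB).1).2
    calc A = Finset.image (f A) Finset.univ := (image_padSort hK hA'.1 hA'.2).symm
      _ = Finset.image (f B) Finset.univ := by rw [hfAB]
      _ = B := image_padSort hK hB'.1 hB'.2
  rwa [Finset.card_univ, Fintype.card_fun, Fintype.card_fin, Fintype.card_fin] at h1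

lemma marg_le [∀ k, Nonempty (𝒳 k)] {L : ℕ} {η : ℝ} (hη : 0 < η)
    {c : (A : Finset (Fin K)) → ((j : A) → 𝒳 j.1) → ℝ≥0∞}
    (g : (k : Fin K) → 𝒳 k → ℝ) (hg1 : ∀ j xj, g j xj ≤ 1)
    {A : Finset (Fin K)} (hA : A.card ≤ L) {i : Fin K} (hi : i ∈ A) (xi : 𝒳 i) :
    marg 𝒳 A (piInd 𝒳 η c g A) i xi ≤
      ((Finset.univ.sup fun k : Fin K => Fintype.card (𝒳 k) : ℕ) : ℝ) ^ L *
        Real.exp ((g i xi - 1 + ((L : ℝ) - 1)) / η) := by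
  set nmax := (Finset.univ.sup fun k : Fin K => Fintype.card (𝒳 k)) with hn
  set B := Real.exp ((g i xi - 1 + ((L : ℝ) - 1)) / η) with hBdef
  have hB : 0 < B := Real.exp_pos _
  have hterm : ∀ x : (j : A) → 𝒳 j.1,
      (if x ⟨i, hi⟩ = xi then piInd 𝒳 η c g A x else 0) ≤ B := by
    intro x
    split
    case isFalse => exact hB.le
    case isTrue hx =>
      unfold piInd
      split
      · exact hB.le
      · rw [hBdef, Real.exp_le_exp]
        rw [div_le_div_iff_of_pos_right hη]
        have h1 : ∑ j ∈ Finset.univ.erase (⟨i, hi⟩ : A), g j.1 (x j)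
            ≤ ((Finset.univ.erase (⟨i, hi⟩ : A)).card : ℝ) * 1 := by
          have := Finset.sum_le_card_nsmul (Finset.univ.erase (⟨i, hi⟩ : A))
            (fun j => g j.1 (x j)) 1 (fun j _ => hg1 j.1 (x j))
          rwa [nsmul_eq_mul] at this
        have h2 : ((Finset.univ.erase (⟨i, hi⟩ : A)).card : ℝ) ≤ (L : ℝ) - 1 := by
          rw [Finset.card_erase_of_mem (Finset.mem_univ _), Finset.card_univ,
            Fintype.card_coe]
          have hc1 : 1 ≤ A.card := Finset.card_pos.mpr ⟨i, hi⟩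
          rw [Nat.cast_sub hc1]
          have := (Nat.cast_le (α := ℝ)).mpr hA
          simp only [Nat.cast_one]
          linarith
        have h3 : ∑ j : A, g j.1 (x j)
            = (∑ j ∈ Finset.univ.erase (⟨i, hi⟩ : A), g j.1 (x j)) + g i (x ⟨i, hi⟩) :=
          (Finset.sum_erase_add Finset.univ _ (Finset.mem_univ (⟨i, hi⟩ : A))).symm
        rw [h3, hx]
        have := ENNReal.toReal_nonneg (a := c A x)
        linarith
  unfold marg
  rw [dif_pos hi]
  have hnm1 : 1 ≤ nmax :=
    le_trans Fintype.card_pos (Finset.le_sup (f := fun k => Fintype.card (𝒳 k))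
      (Finset.mem_univ i))
  have hcard : Fintype.card ((j : A) → 𝒳 j.1) ≤ nmax ^ L := by
    rw [Fintype.card_pi]
    calc ∏ j : A, Fintype.card (𝒳 j.1)
        ≤ nmax ^ (Finset.univ : Finset A).card :=
          Finset.prod_le_pow_card _ _ _
            (fun j _ => Finset.le_sup (f := fun k => Fintype.card (𝒳 k)) (Finset.mem_univ j.1))
      _ ≤ nmax ^ L := Nat.pow_le_pow_right hnm1
          (by rw [Finset.card_univ, Fintype.card_coe]; exact hA)
  calc ∑ x : (j : A) → 𝒳 j.1, (if x ⟨i, hi⟩ = xi then piInd 𝒳 η c g A x else 0)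
      ≤ ∑ _x : (j : A) → 𝒳 j.1, B := Finset.sum_le_sum fun x _ => hterm x
    _ = (Fintype.card ((j : A) → 𝒳 j.1) : ℝ) * B := by
        rw [Finset.sum_const, Finset.card_univ, nsmul_eq_mul]
    _ ≤ ((nmax : ℝ)) ^ L * B := by
        have : ((Fintype.card ((j : A) → 𝒳 j.1) : ℕ) : ℝ) ≤ ((nmax ^ L : ℕ) : ℝ) :=
          Nat.cast_le.mpr hcard
        rw [Nat.cast_pow] at this
        exact mul_le_mul_of_nonneg_right this hB.le

lemma totMarg_le [∀ k, Nonempty (𝒳 k)] {L : ℕ} {η : ℝ} (hη : 0 < η) (hK : 0 < K)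
    {c : (A : Finset (Fin K)) → ((j : A) → 𝒳 j.1) → ℝ≥0∞}
    (g : (k : Fin K) → 𝒳 k → ℝ) (hg1 : ∀ j xj, g j xj ≤ 1) (i : Fin K) (xi : 𝒳 i) :
    totMarg 𝒳 L (piInd 𝒳 η c g) i xi ≤
      (K : ℝ) ^ L * ((Finset.univ.sup fun k : Fin K => Fintype.card (𝒳 k) : ℕ) : ℝ) ^ L *
        Real.exp ((g i xi - 1 + ((L : ℝ) - 1)) / η) := by
  set nmax := (Finset.univ.sup fun k : Fin K => Fintype.card (𝒳 k)) with hn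
  set B := Real.exp ((g i xi - 1 + ((L : ℝ) - 1)) / η) with hBdef
  have hB : 0 < B := Real.exp_pos _
  calc totMarg 𝒳 L (piInd 𝒳 η c g) i xi
      ≤ ∑ _A ∈ SKLi K L i, (nmax : ℝ) ^ L * B := by
        refine Finset.sum_le_sum fun A hA => ?_
        have h1 := Finset.mem_filter.mp hA
        have h2 := (Finset.mem_filter.mp h1.1).2
        exact marg_le 𝒳 hη g hg1 h2.2 h1.2 xi
    _ = ((SKLi K L i).card : ℝ) * ((nmax : ℝ) ^ L * B) := by
        rw [Finset.sum_const, nsmul_eq_mul]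
    _ ≤ (K : ℝ) ^ L * ((nmax : ℝ) ^ L * B) := by
        have : (((SKLi K L i).card : ℕ) : ℝ) ≤ ((K ^ L : ℕ) : ℝ) :=
          Nat.cast_le.mpr (card_SKLi_le hK L i)
        rw [Nat.cast_pow] at this
        exact mul_le_mul_of_nonneg_right this (by positivity)
    _ = (K : ℝ) ^ L * (nmax : ℝ) ^ L * B := by ring

lemma totMarg_eq_of_min {L : ℕ} {η : ℝ} (hη : 0 < η)
    {c : (A : Finset (Fin K)) → ((j : A) → 𝒳 j.1) → ℝ≥0∞}
    {μ : (k : Fin K) → 𝒳 k → ℝ} {gstar : (k : Fin K) → 𝒳 k → ℝ}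
    (hstar : ∀ g' : (k : Fin K) → 𝒳 k → ℝ,
      dualObj 𝒳 η L c μ gstar ≤ dualObj 𝒳 η L c μ g')
    (i : Fin K) (xi : 𝒳 i) :
    totMarg 𝒳 L (piInd 𝒳 η c gstar) i xi = μ i xi := by
  classical
  set T := totMarg 𝒳 L (piInd 𝒳 η c gstar) i xi with hT
  -- the perturbation direction
  set pert : (j : Fin K) → 𝒳 j → ℝ :=
    (fun j y => if h : j = i then (if (h ▸ y) = xi then 1 else 0) else 0) with hpert
  have p1 : ∀ y : 𝒳 i, pert i y = if y = xi then 1 else 0 := by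
    intro y; exact dif_pos rfl
  have p2 : ∀ (j : Fin K) (hj : j ≠ i) (y : 𝒳 j), pert j y = 0 := by
    intro j hj y; exact dif_neg hj
  -- sum of pert over a subset
  have q : ∀ (A : Finset (Fin K)) (x : (j : A) → 𝒳 j.1),
      (∑ j : A, pert j.1 (x j))
        = if h : i ∈ A then (if x ⟨i, h⟩ = xi then 1 else 0) else 0 := by
    intro A x
    by_cases hiA : i ∈ A
    · rw [dif_pos hiA,
        ← Finset.sum_erase_add Finset.univ _ (Finset.mem_univ (⟨i, hiA⟩ : A))]
      rw [Finset.sum_eq_zero (fun j hj => p2 j.1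
        (fun e => (Finset.mem_erase.mp hj).1 (Subtype.ext e)) (x j)), zero_add, p1]
    · rw [dif_neg hiA]
      exact Finset.sum_eq_zero fun j _ => p2 j.1 (fun e => hiA (e ▸ j.2)) (x j)
  set gs : ℝ → (j : Fin K) → 𝒳 j → ℝ := fun s j y => gstar j y + s * pert j y with hgs
  -- value of perturbed couplings
  have r1 : ∀ (s : ℝ) (A : Finset (Fin K)) (x : (j : A) → 𝒳 j.1),
      piInd 𝒳 η c (gs s) A x
        = piInd 𝒳 η c gstar A x * Real.exp (s * (∑ j : A, pert j.1 (x j)) / η) := by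
    intro s A x
    unfold piInd
    split
    · simp
    · rw [← Real.exp_add]
      congr 1
      rw [hgs]
      simp only []
      rw [Finset.sum_add_distrib, ← Finset.mul_sum]
      ring
  -- exp of the indicator
  have r2 : ∀ (s : ℝ) (A : Finset (Fin K)) (x : (j : A) → 𝒳 j.1),
      Real.exp (s * (∑ j : A, pert j.1 (x j)) / η)
        = 1 + (Real.exp (s / η) - 1) *
            (if h : i ∈ A then (if x ⟨i, h⟩ = xi then 1 else 0) else 0) := by
    intro s A x
    rw [q]
    by_cases hiA : i ∈ A
    · rw [dif_pos hiA]
      split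
      · rw [mul_one]
        rw [mul_one]
        ring
      · rw [mul_zero]
        rw [mul_zero, zero_div, Real.exp_zero, add_zero]
    · rw [dif_neg hiA, mul_zero]
      rw [mul_zero, zero_div, Real.exp_zero, add_zero]
  -- first term of the dual objective
  have r3 : ∀ s : ℝ,
      (∑ A ∈ SKL K L, ∑ x : (j : A) → 𝒳 j.1, piInd 𝒳 η c (gs s) A x)
        = (∑ A ∈ SKL K L, ∑ x : (j : A) → 𝒳 j.1, piInd 𝒳 η c gstar A x)
          + (Real.exp (s / η) - 1) * T := by
    intro s
    have hsummand : ∀ (A : Finset (Fin K)) (x : (j : A) → 𝒳 j.1),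
        piInd 𝒳 η c (gs s) A x = piInd 𝒳 η c gstar A x
          + (Real.exp (s / η) - 1) * (if h : i ∈ A then
              (if x ⟨i, h⟩ = xi then piInd 𝒳 η c gstar A x else 0) else 0) := by
      intro A x
      rw [r1, r2]
      by_cases hiA : i ∈ A
      · rw [dif_pos hiA, dif_pos hiA]
        split
        · ring
        · ring
      · rw [dif_neg hiA, dif_neg hiA]; ring
    simp_rw [hsummand, Finset.sum_add_distrib, ← Finset.mul_sum]
    congr 1
    congr 1
    have hAx : ∀ A ∈ SKL K L,
        (∑ x : (j : A) → 𝒳 j.1, if h : i ∈ A then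
            (if x ⟨i, h⟩ = xi then piInd 𝒳 η c gstar A x else 0) else 0)
          = if i ∈ A then marg 𝒳 A (piInd 𝒳 η c gstar A) i xi else 0 := by
      intro A _
      by_cases hiA : i ∈ A
      · rw [if_pos hiA]
        unfold marg
        rw [dif_pos hiA]
        exact Finset.sum_congr rfl fun x _ => by rw [dif_pos hiA]
      · rw [if_neg hiA]
        exact Finset.sum_eq_zero fun x _ => by rw [dif_neg hiA]
    rw [Finset.sum_congr rfl hAx, ← Finset.sum_filter]
    rw [hT]
    rfl
  -- linear term of the dual objective
  have r4 : ∀ s : ℝ,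
      (∑ j : Fin K, ∑ y : 𝒳 j, gs s j y * μ j y)
        = (∑ j : Fin K, ∑ y : 𝒳 j, gstar j y * μ j y) + s * μ i xi := by
    intro s
    have hsummand : ∀ (j : Fin K) (y : 𝒳 j),
        gs s j y * μ j y = gstar j y * μ j y + s * (pert j y * μ j y) := by
      intro j y; rw [hgs]; ring
    simp_rw [hsummand, Finset.sum_add_distrib, ← Finset.mul_sum]
    congr 1
    congr 1
    rw [Finset.sum_eq_single i]
    · rw [Finset.sum_eq_single xi]
      · rw [p1, if_pos rfl, one_mul]
      · intro y _ hy
        rw [p1, if_neg hy, zero_mul]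
      · intro h; exact absurd (Finset.mem_univ xi) h
    · intro j _ hj
      exact Finset.sum_eq_zero fun y _ => by rw [p2 j hj y, zero_mul]
    · intro h; exact absurd (Finset.mem_univ i) h
  -- the one-dimensional objective
  have hψ : ∀ s : ℝ, 0 ≤ (Real.exp (s / η) - 1) * T - s * (μ i xi / η) := by
    intro s
    have h := hstar (gs s)
    unfold dualObj at h
    rw [r3 s, r4 s] at h
    have hexp : (1 / η) * ((∑ j : Fin K, ∑ y : 𝒳 j, gstar j y * μ j y) + s * μ i xi)
        = (1 / η) * (∑ j : Fin K, ∑ y : 𝒳 j, gstar j y * μ j y) + s * (μ i xi / η) := by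
      ring
    rw [hexp] at h
    linarith
  set ψ : ℝ → ℝ := fun s => (Real.exp (s / η) - 1) * T - s * (μ i xi / η) with hψdef
  have hmin : IsLocalMin ψ 0 := by
    refine Filter.Eventually.of_forall fun s => ?_
    have h0 : ψ 0 = 0 := by
      rw [hψdef]; simp
    rw [h0]
    exact hψ s
  have hderiv : HasDerivAt ψ ((1 / η) * T - μ i xi / η) 0 := by
    have h1 : HasDerivAt (fun s : ℝ => s / η) (1 / η) 0 := by
      simpa using (hasDerivAt_id (0 : ℝ)).div_const η
    have h2 : HasDerivAt (fun s : ℝ => Real.exp (s / η)) (1 / η) 0 := by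
      have := (Real.hasDerivAt_exp ((0 : ℝ) / η)).comp 0 h1
      simp only [zero_div, Real.exp_zero, one_mul] at this
      exact this
    have h3 : HasDerivAt (fun s : ℝ => (Real.exp (s / η) - 1) * T) ((1 / η) * T) 0 :=
      (h2.sub_const 1).mul_const T
    have h4 : HasDerivAt (fun s : ℝ => s * (μ i xi / η)) (μ i xi / η) 0 := by
      simpa using (hasDerivAt_id (0 : ℝ)).mul_const (μ i xi / η)
    exact h3.sub h4
  have hzero : (1 / η) * T - μ i xi / η = 0 := by
    rw [← hderiv.deriv]
    exact hmin.deriv_eq_zero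
  have hηne : η ≠ 0 := ne_of_gt hη
  field_simp at hzero
  linarith

lemma muMin_le (hK : 0 < K) [∀ k, Nonempty (𝒳 k)] (μ : (k : Fin K) → 𝒳 k → ℝ)
    (j : Fin K) (y : 𝒳 j) : muMin 𝒳 μ ≤ μ j y := by
  have hS : {v : ℝ | ∃ (j : Fin K) (y : 𝒳 j), v = μ j y}
      = Set.range (fun p : Σ k : Fin K, 𝒳 k => μ p.1 p.2) := by
    ext v
    constructor
    · rintro ⟨j, y, rfl⟩; exact ⟨⟨j, y⟩, rfl⟩
    · rintro ⟨⟨j, y⟩, rfl⟩; exact ⟨j, y, rfl⟩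
  unfold muMin
  rw [hS]
  exact csInf_le (Set.finite_range _).bddBelow ⟨⟨j, y⟩, rfl⟩

lemma muMin_pos (hK : 0 < K) [∀ k, Nonempty (𝒳 k)] {μ : (k : Fin K) → 𝒳 k → ℝ}
    (hμpos : ∀ k y, 0 < μ k y) : 0 < muMin 𝒳 μ := by
  have hS : {v : ℝ | ∃ (j : Fin K) (y : 𝒳 j), v = μ j y}
      = Set.range (fun p : Σ k : Fin K, 𝒳 k => μ p.1 p.2) := by
    ext v
    constructor
    · rintro ⟨j, y, rfl⟩; exact ⟨⟨j, y⟩, rfl⟩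
    · rintro ⟨⟨j, y⟩, rfl⟩; exact ⟨j, y, rfl⟩
  unfold muMin
  rw [hS]
  have hne : (Set.range (fun p : Σ k : Fin K, 𝒳 k => μ p.1 p.2)).Nonempty := by
    refine ⟨μ ⟨0, hK⟩ (Classical.arbitrary _), ⟨⟨⟨0, hK⟩, Classical.arbitrary _⟩, rfl⟩⟩
  obtain ⟨p, hp⟩ := hne.csInf_mem (Set.finite_range _)
  rw [← hp]
  exact hμpos p.1 p.2

lemma iter_le_one {L : ℕ} (hL : 1 ≤ L) {η : ℝ} (hη : 0 < η)
    {c : (A : Finset (Fin K)) → ((j : A) → 𝒳 j.1) → ℝ≥0∞}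
    (hc : ∀ (i : Fin K) (x : (j : ({i} : Finset (Fin K))) → 𝒳 j.1), c {i} x = 0)
    {μ : (k : Fin K) → 𝒳 k → ℝ} (hμpos : ∀ k y, 0 < μ k y) (hμ1 : ∀ k y, μ k y ≤ 1)
    {g : ℕ → (k : Fin K) → 𝒳 k → ℝ} (hg : IsGreedySinkhorn 𝒳 η L c μ g) :
    ∀ (t : ℕ) (i : Fin K) (xi : 𝒳 i), g t i xi ≤ 1 := by
  intro t
  induction t with
  | zero => intro i xi; rw [hg.1 i xi]; norm_num
  | succ t ih =>
    obtain ⟨I, _, hupd, hkeep⟩ := hg.2 t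
    intro i xi
    by_cases hiI : i = I
    · subst hiI
      rw [hupd xi]
      have hT := exp_le_totMarg 𝒳 (η := η) hL hc (g t) i xi
      have hTpos := totMarg_pos 𝒳 (η := η) hL hc (g t) i xi
      have hlog : (g t i xi - 1) / η ≤ Real.log (totMarg 𝒳 L (piInd 𝒳 η c (g t)) i xi) :=
        (Real.le_log_iff_exp_le hTpos).mpr hT
      have h1 : g t i xi - 1 ≤ η * Real.log (totMarg 𝒳 L (piInd 𝒳 η c (g t)) i xi) := by
        have := mul_le_mul_of_nonneg_left hlog hη.le
        rwa [mul_div_cancel₀ _ (ne_of_gt hη)] at this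
      have h2 : η * Real.log (μ i xi) ≤ 0 :=
        mul_nonpos_of_nonneg_of_nonpos hη.le
          (Real.log_nonpos (hμpos i xi).le (hμ1 i xi))
      linarith
    · rw [hkeep i hiI]; exact ih i xi

lemma iter_ge {L : ℕ} (hL : 1 ≤ L) (hK : 0 < K) [∀ k, Nonempty (𝒳 k)] {η : ℝ} (hη : 0 < η)
    {c : (A : Finset (Fin K)) → ((j : A) → 𝒳 j.1) → ℝ≥0∞}
    (hc : ∀ (i : Fin K) (x : (j : ({i} : Finset (Fin K))) → 𝒳 j.1), c {i} x = 0)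
    {μ : (k : Fin K) → 𝒳 k → ℝ} (hμpos : ∀ k y, 0 < μ k y) (hμ1 : ∀ k y, μ k y ≤ 1)
    {g : ℕ → (k : Fin K) → 𝒳 k → ℝ} (hg : IsGreedySinkhorn 𝒳 η L c μ g) :
    ∀ (t : ℕ) (i : Fin K) (xi : 𝒳 i),
      min 0 (1 - ((L : ℝ) - 1) + η * Real.log (muMin 𝒳 μ)
        - η * Real.log ((K : ℝ) ^ L *
            ((Finset.univ.sup fun k : Fin K => Fintype.card (𝒳 k) : ℕ) : ℝ) ^ L))
        ≤ g t i xi := by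
  set nmax := (Finset.univ.sup fun k : Fin K => Fintype.card (𝒳 k)) with hn
  have hnm1 : (1 : ℝ) ≤ (nmax : ℝ) := by
    have : 1 ≤ nmax := le_trans Fintype.card_pos
      (Finset.le_sup (f := fun k => Fintype.card (𝒳 k)) (Finset.mem_univ ⟨0, hK⟩))
    exact_mod_cast this
  have hKpos : (0 : ℝ) < (K : ℝ) := by exact_mod_cast hK
  have hMbpos : (0 : ℝ) < (K : ℝ) ^ L * (nmax : ℝ) ^ L := by positivity
  set B := 1 - ((L : ℝ) - 1) + η * Real.log (muMin 𝒳 μ)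
    - η * Real.log ((K : ℝ) ^ L * (nmax : ℝ) ^ L) with hB
  intro t
  induction t with
  | zero => intro i xi; rw [hg.1 i xi]; exact min_le_left _ _
  | succ t ih =>
    obtain ⟨I, _, hupd, hkeep⟩ := hg.2 t
    intro i xi
    by_cases hiI : i = I
    · subst hiI
      rw [hupd xi]
      refine le_trans (min_le_right _ _) ?_
      have hTpos := totMarg_pos 𝒳 (η := η) hL hc (g t) i xi
      have hTle := totMarg_le 𝒳 (L := L) (c := c) hη hK (g t)
        (iter_le_one 𝒳 hL hη hc hμpos hμ1 hg t) i xi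
      have hlogT : Real.log (totMarg 𝒳 L (piInd 𝒳 η c (g t)) i xi)
          ≤ Real.log ((K : ℝ) ^ L * (nmax : ℝ) ^ L)
            + (g t i xi - 1 + ((L : ℝ) - 1)) / η := by
        have h := Real.log_le_log hTpos hTle
        rwa [Real.log_mul (ne_of_gt hMbpos) (ne_of_gt (Real.exp_pos _)),
          Real.log_exp] at h
      have h1 : η * Real.log (totMarg 𝒳 L (piInd 𝒳 η c (g t)) i xi)
          ≤ η * Real.log ((K : ℝ) ^ L * (nmax : ℝ) ^ L)
            + (g t i xi - 1 + ((L : ℝ) - 1)) := by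
        have := mul_le_mul_of_nonneg_left hlogT hη.le
        rw [mul_add, mul_div_cancel₀ _ (ne_of_gt hη)] at this
        linarith
      have h2 : η * Real.log (muMin 𝒳 μ) ≤ η * Real.log (μ i xi) :=
        mul_le_mul_of_nonneg_left
          (Real.log_le_log (muMin_pos 𝒳 hK hμpos) (muMin_le 𝒳 hK μ i xi)) hη.le
      rw [hB]
      linarith
    · rw [hkeep i hiI]; exact ih i xi

lemma gstar_le_one {L : ℕ} (hL : 1 ≤ L) {η : ℝ} (hη : 0 < η)
    {c : (A : Finset (Fin K)) → ((j : A) → 𝒳 j.1) → ℝ≥0∞}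
    (hc : ∀ (i : Fin K) (x : (j : ({i} : Finset (Fin K))) → 𝒳 j.1), c {i} x = 0)
    {μ : (k : Fin K) → 𝒳 k → ℝ} (hμ1 : ∀ k y, μ k y ≤ 1)
    {gstar : (k : Fin K) → 𝒳 k → ℝ}
    (hstar : ∀ g' : (k : Fin K) → 𝒳 k → ℝ,
      dualObj 𝒳 η L c μ gstar ≤ dualObj 𝒳 η L c μ g') :
    ∀ (i : Fin K) (xi : 𝒳 i), gstar i xi ≤ 1 := by
  intro i xi
  have h1 : Real.exp ((gstar i xi - 1) / η) ≤ 1 :=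
    le_trans (exp_le_totMarg 𝒳 (η := η) hL hc gstar i xi)
      (le_of_eq_of_le (totMarg_eq_of_min 𝒳 hη hstar i xi) (hμ1 i xi))
  have h2 : (gstar i xi - 1) / η ≤ 0 := Real.exp_le_one_iff.mp h1
  have h3 : gstar i xi - 1 ≤ 0 := by
    by_contra h
    push_neg at h
    exact absurd (div_pos h hη) (not_lt.mpr h2)
  linarith

lemma gstar_ge {L : ℕ} (hL : 1 ≤ L) (hK : 0 < K) [∀ k, Nonempty (𝒳 k)] {η : ℝ} (hη : 0 < η)
    {c : (A : Finset (Fin K)) → ((j : A) → 𝒳 j.1) → ℝ≥0∞}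
    (hc : ∀ (i : Fin K) (x : (j : ({i} : Finset (Fin K))) → 𝒳 j.1), c {i} x = 0)
    {μ : (k : Fin K) → 𝒳 k → ℝ} (hμpos : ∀ k y, 0 < μ k y) (hμ1 : ∀ k y, μ k y ≤ 1)
    {gstar : (k : Fin K) → 𝒳 k → ℝ}
    (hstar : ∀ g' : (k : Fin K) → 𝒳 k → ℝ,
      dualObj 𝒳 η L c μ gstar ≤ dualObj 𝒳 η L c μ g') :
    ∀ (i : Fin K) (xi : 𝒳 i),
      1 - ((L : ℝ) - 1) + η * Real.log (muMin 𝒳 μ)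
        - η * Real.log ((K : ℝ) ^ L *
            ((Finset.univ.sup fun k : Fin K => Fintype.card (𝒳 k) : ℕ) : ℝ) ^ L)
        ≤ gstar i xi := by
  intro i xi
  set nmax := (Finset.univ.sup fun k : Fin K => Fintype.card (𝒳 k)) with hn
  have hKpos : (0 : ℝ) < (K : ℝ) := by exact_mod_cast hK
  have hnm1 : (1 : ℝ) ≤ (nmax : ℝ) := by
    have : 1 ≤ nmax := le_trans Fintype.card_pos
      (Finset.le_sup (f := fun k => Fintype.card (𝒳 k)) (Finset.mem_univ ⟨0, hK⟩))
    exact_mod_cast this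
  have hMbpos : (0 : ℝ) < (K : ℝ) ^ L * (nmax : ℝ) ^ L := by positivity
  have hTle := totMarg_le 𝒳 (L := L) (c := c) hη hK gstar (gstar_le_one 𝒳 hL hη hc hμ1 hstar) i xi
  rw [totMarg_eq_of_min 𝒳 hη hstar i xi] at hTle
  have hlog : Real.log (μ i xi)
      ≤ Real.log ((K : ℝ) ^ L * (nmax : ℝ) ^ L)
        + (gstar i xi - 1 + ((L : ℝ) - 1)) / η := by
    have h := Real.log_le_log (hμpos i xi) hTle
    rwa [Real.log_mul (ne_of_gt hMbpos) (ne_of_gt (Real.exp_pos _)),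
      Real.log_exp] at h
  have h1 : η * Real.log (μ i xi)
      ≤ η * Real.log ((K : ℝ) ^ L * (nmax : ℝ) ^ L)
        + (gstar i xi - 1 + ((L : ℝ) - 1)) := by
    have := mul_le_mul_of_nonneg_left hlog hη.le
    rw [mul_add, mul_div_cancel₀ _ (ne_of_gt hη)] at this
    linarith
  have h2 : η * Real.log (muMin 𝒳 μ) ≤ η * Real.log (μ i xi) :=
    mul_le_mul_of_nonneg_left
      (Real.log_le_log (muMin_pos 𝒳 hK hμpos) (muMin_le 𝒳 hK μ i xi)) hη.le
  linarith


/-- along the greedy Sinkhorn iteration, for `t ≥ 1`,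
`𝒢^L(gᵗ) − 𝒢^L(g*) ≤ (R̄/η) E_t`, where `g*` minimizes `𝒢^L`. -/
theorem stmt11 (K L : ℕ) (hK : 0 < K) (hL : 1 ≤ L) (hLK : L ≤ K)
    (𝒳 : Fin K → Type*) [∀ i, Fintype (𝒳 i)] [∀ i, DecidableEq (𝒳 i)]
    [∀ i, Nonempty (𝒳 i)]
    (η : ℝ) (hη : 0 < η) (n : ℝ) (hn : 0 < n)
    (c : (A : Finset (Fin K)) → ((j : A) → 𝒳 j.1) → ℝ≥0∞)
    (hc : ∀ (i : Fin K) (x : (j : ({i} : Finset (Fin K))) → 𝒳 j.1), c {i} x = 0)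
    (μ : (i : Fin K) → 𝒳 i → ℝ) (hμpos : ∀ i xi, 0 < μ i xi)
    (hmass : ∑ i : Fin K, ∑ xi : 𝒳 i, μ i xi = 1)
    (g : ℕ → (i : Fin K) → 𝒳 i → ℝ)
    (hg : IsGreedySinkhorn 𝒳 η L c μ g)
    (gstar : (i : Fin K) → 𝒳 i → ℝ)
    (hstar : ∀ g' : (i : Fin K) → 𝒳 i → ℝ,
      dualObj 𝒳 η L c μ gstar ≤ dualObj 𝒳 η L c μ g') :
    ∀ t : ℕ, 1 ≤ t →
      dualObj 𝒳 η L c μ (g t) - dualObj 𝒳 η L c μ gstar ≤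
        (Rbar 𝒳 η L n μ / η) * Err 𝒳 η L c μ g t := by
  intro t _
  classical
  have hμ1 : ∀ (k : Fin K) (y : 𝒳 k), μ k y ≤ 1 := by
    intro k y
    calc μ k y ≤ ∑ xi : 𝒳 k, μ k xi :=
          Finset.single_le_sum (fun z _ => (hμpos k z).le) (Finset.mem_univ y)
      _ ≤ ∑ i : Fin K, ∑ xi : 𝒳 i, μ i xi :=
          Finset.single_le_sum (f := fun i => ∑ xi : 𝒳 i, μ i xi)
            (fun i _ => Finset.sum_nonneg fun z _ => (hμpos i z).le) (Finset.mem_univ k)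
      _ = 1 := hmass
  have hKpos : (0 : ℝ) < (K : ℝ) := by exact_mod_cast hK
  have hnm1 : (1 : ℝ) ≤ ((Finset.univ.sup fun k : Fin K => Fintype.card (𝒳 k) : ℕ) : ℝ) := by
    have : 1 ≤ (Finset.univ.sup fun k : Fin K => Fintype.card (𝒳 k)) :=
      le_trans Fintype.card_pos
        (Finset.le_sup (f := fun k => Fintype.card (𝒳 k)) (Finset.mem_univ ⟨0, hK⟩))
    exact_mod_cast this
  have hRlog : (K : ℝ) * Cstar 𝒳 n * n
      = (K : ℝ) * ((Finset.univ.sup fun k : Fin K => Fintype.card (𝒳 k) : ℕ) : ℝ) := by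
    unfold Cstar
    field_simp
  have hmuMin1 : muMin 𝒳 μ ≤ 1 :=
    le_trans (muMin_le 𝒳 hK μ ⟨0, hK⟩ (Classical.arbitrary _)) (hμ1 _ _)
  have hmuMinpos := muMin_pos 𝒳 hK hμpos
  have hlogmu : Real.log (muMin 𝒳 μ) ≤ 0 := Real.log_nonpos hmuMinpos.le hmuMin1
  have hlogKn : 0 ≤ Real.log
      ((K : ℝ) * ((Finset.univ.sup fun k : Fin K => Fintype.card (𝒳 k) : ℕ) : ℝ)) := by
    have hK1 : (1 : ℝ) ≤ (K : ℝ) := by exact_mod_cast hK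
    exact Real.log_nonneg (le_trans hK1 (le_mul_of_one_le_right (by linarith) hnm1))
  have hlogMb : Real.log ((K : ℝ) ^ L *
        ((Finset.univ.sup fun k : Fin K => Fintype.card (𝒳 k) : ℕ) : ℝ) ^ L)
      = (L : ℝ) * Real.log
        ((K : ℝ) * ((Finset.univ.sup fun k : Fin K => Fintype.card (𝒳 k) : ℕ) : ℝ)) := by
    rw [← mul_pow, Real.log_pow]
  have hL1 : (1 : ℝ) ≤ (L : ℝ) := by exact_mod_cast hL
  have hR1 : 1 ≤ Rbar 𝒳 η L n μ := by
    unfold Rbar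
    rw [hRlog]
    have h1 : η * Real.log (muMin 𝒳 μ) ≤ 0 :=
      mul_nonpos_of_nonneg_of_nonpos hη.le hlogmu
    have h2 : 0 ≤ η * (L : ℝ) * Real.log
        ((K : ℝ) * ((Finset.univ.sup fun k : Fin K => Fintype.card (𝒳 k) : ℕ) : ℝ)) :=
      mul_nonneg (mul_nonneg hη.le (Nat.cast_nonneg L)) hlogKn
    linarith
  have hRB : 1 - (1 - ((L : ℝ) - 1) + η * Real.log (muMin 𝒳 μ)
        - η * Real.log ((K : ℝ) ^ L *
          ((Finset.univ.sup fun k : Fin K => Fintype.card (𝒳 k) : ℕ) : ℝ) ^ L))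
      ≤ Rbar 𝒳 η L n μ := by
    unfold Rbar
    rw [hRlog, hlogMb]
    ring_nf
    linarith
  have key : ∀ (i : Fin K) (xi : 𝒳 i), |g t i xi - gstar i xi| ≤ Rbar 𝒳 η L n μ := by
    intro i xi
    have h1 := iter_le_one 𝒳 hL hη hc hμpos hμ1 hg t i xi
    have h2 := iter_ge 𝒳 hL hK hη hc hμpos hμ1 hg t i xi
    have h3 := gstar_le_one 𝒳 hL hη hc hμ1 hstar i xi
    have h4 := gstar_ge 𝒳 hL hK hη hc hμpos hμ1 hstar i xi
    have h5 : min 0 (1 - ((L : ℝ) - 1) + η * Real.log (muMin 𝒳 μ)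
        - η * Real.log ((K : ℝ) ^ L *
          ((Finset.univ.sup fun k : Fin K => Fintype.card (𝒳 k) : ℕ) : ℝ) ^ L))
        ≤ gstar i xi := le_trans (min_le_right _ _) h4
    have h6 : 1 - min 0 (1 - ((L : ℝ) - 1) + η * Real.log (muMin 𝒳 μ)
        - η * Real.log ((K : ℝ) ^ L *
          ((Finset.univ.sup fun k : Fin K => Fintype.card (𝒳 k) : ℕ) : ℝ) ^ L))
        ≤ Rbar 𝒳 η L n μ := by
      rcases le_total (0 : ℝ) (1 - ((L : ℝ) - 1) + η * Real.log (muMin 𝒳 μ)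
        - η * Real.log ((K : ℝ) ^ L *
          ((Finset.univ.sup fun k : Fin K => Fintype.card (𝒳 k) : ℕ) : ℝ) ^ L)) with h | h
      · rw [min_eq_left h]; linarith
      · rw [min_eq_right h]; linarith
    rw [abs_le]
    constructor <;> [linarith [h2, h3, h6]; linarith [h1, h5, h6]]
  have hRnn : 0 ≤ Rbar 𝒳 η L n μ := le_trans zero_le_one hR1
  calc dualObj 𝒳 η L c μ (g t) - dualObj 𝒳 η L c μ gstar
      ≤ (1 / η) * ∑ i : Fin K, ∑ xi : 𝒳 i,
          (g t i xi - gstar i xi) * (totMarg 𝒳 L (piInd 𝒳 η c (g t)) i xi - μ i xi) :=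
        dual_diff_le 𝒳 hη c μ (g t) gstar
    _ ≤ (1 / η) * (Rbar 𝒳 η L n μ * Err 𝒳 η L c μ g t) := by
        apply mul_le_mul_of_nonneg_left ?_ (one_div_nonneg.mpr hη.le)
        unfold Err l1
        rw [Finset.mul_sum]
        refine Finset.sum_le_sum fun i _ => ?_
        rw [Finset.mul_sum]
        refine Finset.sum_le_sum fun xi _ => ?_
        calc (g t i xi - gstar i xi) * (totMarg 𝒳 L (piInd 𝒳 η c (g t)) i xi - μ i xi)
            ≤ |(g t i xi - gstar i xi) * (totMarg 𝒳 L (piInd 𝒳 η c (g t)) i xi - μ i xi)| :=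
              le_abs_self _
          _ = |g t i xi - gstar i xi| * |μ i xi - totMarg 𝒳 L (piInd 𝒳 η c (g t)) i xi| := by
              rw [abs_mul, abs_sub_comm (totMarg 𝒳 L (piInd 𝒳 η c (g t)) i xi) (μ i xi)]
          _ ≤ Rbar 𝒳 η L n μ * |μ i xi - totMarg 𝒳 L (piInd 𝒳 η c (g t)) i xi| :=
              mul_le_mul_of_nonneg_right (key i xi) (abs_nonneg _)
    _ = (Rbar 𝒳 η L n μ / η) * Err 𝒳 η L c μ g t := by ring


end
end
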